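/- (Exponential stability of the ORFD model, uniform in h.) Let k₁, k₂ > 0 and let δ > 0 satisfy δ < (1/(2L)) · min( 1/η, 2k₁α₁/(α₁ρ + k₁²), 4k₂βα₁/(2α₁βμ + (α + γ²β)k₂²) ). Then along every solution of the semi-discrete ORFD system, the discrete energy satisfies E_h(t) ≤ ((1 + δLη)/(1 − δLη)) · e^{−δ(1 − δLη) t} · E_h(0) for all t ≥ 0. -/

import Mathlib

noncomputable section

/-- Midpoint average `U_{j+1/2} = (U_j + U_{j+1})/2` of a grid function. -/
def gridMid (U : ℕ → ℝ) (j : ℕ) : ℝ := (U j + U (j + 1)) / 2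

/-- Difference quotient `δ_x U_{j+1/2} = (U_{j+1} − U_j)/h` of a grid function. -/
def gridDx (h : ℝ) (U : ℕ → ℝ) (j : ℕ) : ℝ := (U (j + 1) - U j) / h

/-- The discrete ORFD energy. -/
def discEnergy (ρ μ β γ α₁ h : ℝ) (N : ℕ) (u1 u2 w1 w2 : ℕ → ℝ) : ℝ :=
  h / 2 * ∑ j ∈ Finset.range (N + 1),
    (ρ * gridMid w1 j ^ 2 + μ * gridMid w2 j ^ 2
      + β * (γ * gridMid u1 j - gridMid u2 j) ^ 2 + α₁ * gridMid u1 j ^ 2)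

set_option maxHeartbeats 1000000

/-- Auxiliary: the discrete multiplier functional. -/
def Ffun (ρ μ h : ℝ) (N : ℕ) (u1 u2 w1 w2 : ℕ → ℝ) : ℝ :=
  h * ∑ j ∈ Finset.range (N + 1), ((j : ℝ) + 1 / 2) * h *
    (ρ * gridMid w1 j * gridMid u1 j + μ * gridMid w2 j * gridMid u2 j)

/-- Auxiliary: the nodal energy density. -/
def nodeE (ρ μ α β γ : ℝ) (u1 u2 w1 w2 : ℕ → ℝ) (j : ℕ) : ℝ :=
  (ρ * w1 j ^ 2 + μ * w2 j ^ 2 + α * u1 j ^ 2 + β * u2 j ^ 2) / 2 - γ * β * u1 j * u2 j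

private lemma Ederiv (ρ μ α β γ α₁ k₁ k₂ h : ℝ) (hρ : ρ ≠ 0) (hμ : μ ≠ 0) (hne : h ≠ 0)
    (hα₁def : α₁ = α - γ ^ 2 * β) (N : ℕ) (u1 u2 w1 w2 : ℝ → ℕ → ℝ) (t : ℝ)
    (h1 : ∀ j ≤ N, HasDerivAt (fun s => gridMid (u1 s) j) (gridDx h (w1 t) j) t)
    (h2 : ∀ j ≤ N, HasDerivAt (fun s => gridMid (u2 s) j) (gridDx h (w2 t) j) t)
    (h3 : ∀ j ≤ N, HasDerivAt (fun s => gridMid (w1 s) j)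
        ((α * gridDx h (u1 t) j - γ * β * gridDx h (u2 t) j) / ρ) t)
    (h4 : ∀ j ≤ N, HasDerivAt (fun s => gridMid (w2 s) j)
        ((β * gridDx h (u2 t) j - γ * β * gridDx h (u1 t) j) / μ) t)
    (hb1 : w1 t 0 = 0) (hb2 : w2 t 0 = 0)
    (hbL1 : α * u1 t (N + 1) - γ * β * u2 t (N + 1) = -(k₁ * w1 t (N + 1)))
    (hbL2 : β * u2 t (N + 1) - γ * β * u1 t (N + 1) = -(k₂ * w2 t (N + 1))) :
    HasDerivAt (fun s => discEnergy ρ μ β γ α₁ h N (u1 s) (u2 s) (w1 s) (w2 s))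
      (-(k₁ * w1 t (N + 1) ^ 2 + k₂ * w2 t (N + 1) ^ 2)) t := by
  set φ : ℕ → ℝ := fun j => α * w1 t j * u1 t j
    - γ * β * (w1 t j * u2 t j + w2 t j * u1 t j) + β * w2 t j * u2 t j with hφ
  have key : ∀ j ∈ Finset.range (N + 1),
      HasDerivAt (fun s => ρ * gridMid (w1 s) j ^ 2 + μ * gridMid (w2 s) j ^ 2
        + β * (γ * gridMid (u1 s) j - gridMid (u2 s) j) ^ 2 + α₁ * gridMid (u1 s) j ^ 2)
      (2 / h * (φ (j + 1) - φ j)) t := by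
    intro j hj
    have hj' : j ≤ N := by have := Finset.mem_range.mp hj; omega
    have e1 := h1 j hj'
    have e2 := h2 j hj'
    have e3 := h3 j hj'
    have e4 := h4 j hj'
    have big := ((((e3.fun_pow 2).const_mul ρ).fun_add ((e4.fun_pow 2).const_mul μ)).fun_add
      ((((e1.const_mul γ).fun_sub e2).fun_pow 2).const_mul β)).fun_add ((e1.fun_pow 2).const_mul α₁)
    refine big.congr_deriv ?_
    simp only [hφ, gridMid, gridDx, hα₁def]
    field_simp
    ring
  have hsum := (HasDerivAt.fun_sum key).const_mul (h / 2)
  have hfun : HasDerivAt (fun s => discEnergy ρ μ β γ α₁ h N (u1 s) (u2 s) (w1 s) (w2 s))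
      (h / 2 * ∑ j ∈ Finset.range (N + 1), 2 / h * (φ (j + 1) - φ j)) t := hsum
  convert hfun using 1
  rw [← Finset.mul_sum, Finset.sum_range_sub]
  have hφ0 : φ 0 = 0 := by simp [hφ, hb1, hb2]
  have hφL : φ (N + 1) = -(k₁ * w1 t (N + 1) ^ 2 + k₂ * w2 t (N + 1) ^ 2) := by
    simp only [hφ]
    linear_combination (w1 t (N + 1)) * hbL1 + (w2 t (N + 1)) * hbL2
  rw [hφ0, hφL]
  field_simp
  ring
lemma Fderiv (ρ μ α β γ h : ℝ) (hρ : ρ ≠ 0) (hμ : μ ≠ 0) (hne : h ≠ 0)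
    (N : ℕ) (u1 u2 w1 w2 : ℝ → ℕ → ℝ) (t : ℝ)
    (h1 : ∀ j ≤ N, HasDerivAt (fun s => gridMid (u1 s) j) (gridDx h (w1 t) j) t)
    (h2 : ∀ j ≤ N, HasDerivAt (fun s => gridMid (u2 s) j) (gridDx h (w2 t) j) t)
    (h3 : ∀ j ≤ N, HasDerivAt (fun s => gridMid (w1 s) j)
        ((α * gridDx h (u1 t) j - γ * β * gridDx h (u2 t) j) / ρ) t)
    (h4 : ∀ j ≤ N, HasDerivAt (fun s => gridMid (w2 s) j)
        ((β * gridDx h (u2 t) j - γ * β * gridDx h (u1 t) j) / μ) t) :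
    HasDerivAt (fun s => Ffun ρ μ h N (u1 s) (u2 s) (w1 s) (w2 s))
      (((N : ℝ) + 1) * h * nodeE ρ μ α β γ (u1 t) (u2 t) (w1 t) (w2 t) (N + 1)
        - h * ∑ j ∈ Finset.range (N + 1),
            (nodeE ρ μ α β γ (u1 t) (u2 t) (w1 t) (w2 t) j
              + nodeE ρ μ α β γ (u1 t) (u2 t) (w1 t) (w2 t) (j + 1)) / 2) t := by
  set e : ℕ → ℝ := nodeE ρ μ α β γ (u1 t) (u2 t) (w1 t) (w2 t) with he
  have key : ∀ j ∈ Finset.range (N + 1),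
      HasDerivAt (fun s => ((j : ℝ) + 1 / 2) * h *
        (ρ * gridMid (w1 s) j * gridMid (u1 s) j + μ * gridMid (w2 s) j * gridMid (u2 s) j))
      (1 / h * (((j : ℝ) + 1) * h * e (j + 1) - (j : ℝ) * h * e j
        - h * ((e j + e (j + 1)) / 2))) t := by
    intro j hj
    have hj' : j ≤ N := by have := Finset.mem_range.mp hj; omega
    have e1 := h1 j hj'
    have e2 := h2 j hj'
    have e3 := h3 j hj'
    have e4 := h4 j hj'
    have big := (((((hasDerivAt_const t ρ).fun_mul e3).fun_mul e1).fun_add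
      (((hasDerivAt_const t μ).fun_mul e4).fun_mul e2)).const_mul (((j : ℝ) + 1 / 2) * h))
    refine big.congr_deriv ?_
    simp only [he, nodeE, gridMid, gridDx]
    push_cast
    field_simp
    ring
  have hsum := (HasDerivAt.fun_sum key).const_mul h
  have hfun : HasDerivAt (fun s => Ffun ρ μ h N (u1 s) (u2 s) (w1 s) (w2 s))
      (h * ∑ j ∈ Finset.range (N + 1), 1 / h * (((j : ℝ) + 1) * h * e (j + 1)
        - (j : ℝ) * h * e j - h * ((e j + e (j + 1)) / 2))) t := hsum
  convert hfun using 1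
  rw [← Finset.mul_sum]
  rw [show ∀ S : ℝ, h * (1 / h * S) = S from fun S => by field_simp]
  set ψ : ℕ → ℝ := fun j => (j : ℝ) * h * e j with hψ
  have hper : ∀ j ∈ Finset.range (N + 1), ((j : ℝ) + 1) * h * e (j + 1) - (j : ℝ) * h * e j
      - h * ((e j + e (j + 1)) / 2) = (ψ (j + 1) - ψ j) - h * ((e j + e (j + 1)) / 2) := by
    intro j _
    simp only [hψ]
    push_cast
    ring
  rw [Finset.sum_congr rfl hper, Finset.sum_sub_distrib, Finset.sum_range_sub]
  simp only [hψ]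
  rw [← Finset.mul_sum]
  push_cast
  ring
lemma point_le (ρ μ β γ α₁ η : ℝ) (hρ : 0 < ρ) (hμ : 0 < μ) (hβ : 0 < β) (hγ : 0 < γ)
    (hα₁ : 0 < α₁)
    (hη : η = max (Real.sqrt (ρ / α₁) + Real.sqrt (μ * γ ^ 2 / α₁))
      (Real.sqrt (μ / β) + Real.sqrt (μ * γ ^ 2 / α₁)))
    (W1 W2 U1 U2 : ℝ) :
    ρ * W1 * U1 + μ * W2 * U2 ≤
      η / 2 * (ρ * W1 ^ 2 + μ * W2 ^ 2 + β * (γ * U1 - U2) ^ 2 + α₁ * U1 ^ 2) := by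
  set r := Real.sqrt ρ with hr
  set m := Real.sqrt μ with hm
  set A := Real.sqrt α₁ with hA
  set B := Real.sqrt β with hB
  have hrpos : 0 < r := Real.sqrt_pos.mpr hρ
  have hmpos : 0 < m := Real.sqrt_pos.mpr hμ
  have hApos : 0 < A := Real.sqrt_pos.mpr hα₁
  have hBpos : 0 < B := Real.sqrt_pos.mpr hβ
  have hρ' : ρ = r ^ 2 := (Real.sq_sqrt hρ.le).symm
  have hμ' : μ = m ^ 2 := (Real.sq_sqrt hμ.le).symm
  have hα₁' : α₁ = A ^ 2 := (Real.sq_sqrt hα₁.le).symm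
  have hβ' : β = B ^ 2 := (Real.sq_sqrt hβ.le).symm
  have hs1 : Real.sqrt (ρ / α₁) = r / A := by
    rw [hr, hA, Real.sqrt_div hρ.le]
  have hs2 : Real.sqrt (μ * γ ^ 2 / α₁) = m * γ / A := by
    rw [hm, hA, Real.sqrt_div (by positivity), Real.sqrt_mul hμ.le, Real.sqrt_sq hγ.le]
  have hs3 : Real.sqrt (μ / β) = m / B := by
    rw [hm, hB, Real.sqrt_div hμ.le]
  rw [hs1, hs2, hs3] at hη
  have hη1 : r / A + m * γ / A ≤ η := hη ▸ le_max_left _ _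
  have hη2 : m / B + m * γ / A ≤ η := hη ▸ le_max_right _ _
  have hq1 : r + m * γ ≤ η * A := by
    rw [← add_div] at hη1
    exact (div_le_iff₀ hApos).mp hη1
  have hq2 : m * A + m * γ * B ≤ η * (A * B) := by
    have e1 : m / B * (A * B) = m * A := by
      rw [mul_comm A B, ← mul_assoc, div_mul_cancel₀ _ hBpos.ne']
    have e2 : m * γ / A * (A * B) = m * γ * B := by
      rw [← mul_assoc, div_mul_cancel₀ _ hApos.ne']
    calc m * A + m * γ * B = m / B * (A * B) + m * γ / A * (A * B) := by rw [e1, e2]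
      _ = (m / B + m * γ / A) * (A * B) := (add_mul _ _ _).symm
      _ ≤ η * (A * B) := mul_le_mul_of_nonneg_right hη2 (by positivity)
  have hs1' : 0 ≤ η * A - (r + m * γ) := by linarith
  have hs2' : 0 ≤ η * (A * B) - (m * A + m * γ * B) := by linarith
  rw [hρ', hμ', hα₁', hβ']
  have hid : (η / 2 * (r ^ 2 * W1 ^ 2 + m ^ 2 * W2 ^ 2 + B ^ 2 * (γ * U1 - U2) ^ 2
      + A ^ 2 * U1 ^ 2) - (r ^ 2 * W1 * U1 + m ^ 2 * W2 * U2)) * (2 * (A * B)) =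
      B * r * (r * W1 - A * U1) ^ 2 + B * m * γ * (m * W2 - A * U1) ^ 2
      + A * m * (m * W2 + B * (γ * U1 - U2)) ^ 2
      + (η * A - (r + m * γ)) * (B * r ^ 2 * W1 ^ 2)
      + m * γ * B * r ^ 2 * W1 ^ 2
      + (η * A - (r + m * γ)) * (A ^ 2 * B * U1 ^ 2)
      + (η * (A * B) - (m * A + m * γ * B)) * (m ^ 2 * W2 ^ 2)
      + (η * (A * B) - (m * A + m * γ * B)) * (B ^ 2 * (γ * U1 - U2) ^ 2)
      + m * γ * B ^ 3 * (γ * U1 - U2) ^ 2 := by ring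
  have key2 : 0 ≤ (η / 2 * (r ^ 2 * W1 ^ 2 + m ^ 2 * W2 ^ 2 + B ^ 2 * (γ * U1 - U2) ^ 2
      + A ^ 2 * U1 ^ 2) - (r ^ 2 * W1 * U1 + m ^ 2 * W2 * U2)) * (2 * (A * B)) := by
    rw [hid]
    have t1 : 0 ≤ B * r * (r * W1 - A * U1) ^ 2 := by positivity
    have t2 : 0 ≤ B * m * γ * (m * W2 - A * U1) ^ 2 := by positivity
    have t3 : 0 ≤ A * m * (m * W2 + B * (γ * U1 - U2)) ^ 2 := by positivity
    have t4 : 0 ≤ (η * A - (r + m * γ)) * (B * r ^ 2 * W1 ^ 2) :=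
      mul_nonneg hs1' (by positivity)
    have t5 : 0 ≤ m * γ * B * r ^ 2 * W1 ^ 2 := by positivity
    have t6 : 0 ≤ (η * A - (r + m * γ)) * (A ^ 2 * B * U1 ^ 2) :=
      mul_nonneg hs1' (by positivity)
    have t7 : 0 ≤ (η * (A * B) - (m * A + m * γ * B)) * (m ^ 2 * W2 ^ 2) :=
      mul_nonneg hs2' (by positivity)
    have t8 : 0 ≤ (η * (A * B) - (m * A + m * γ * B)) * (B ^ 2 * (γ * U1 - U2) ^ 2) :=
      mul_nonneg hs2' (by positivity)
    have t9 : 0 ≤ m * γ * B ^ 3 * (γ * U1 - U2) ^ 2 := by positivity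
    exact add_nonneg (add_nonneg (add_nonneg (add_nonneg (add_nonneg (add_nonneg
      (add_nonneg (add_nonneg t1 t2) t3) t4) t5) t6) t7) t8) t9
  have hAB : (0:ℝ) < 2 * (A * B) := by positivity
  have := (mul_nonneg_iff_of_pos_right hAB).mp key2
  linarith
lemma trap (ρ μ α β γ α₁ h : ℝ) (hρ : 0 ≤ ρ) (hμ : 0 ≤ μ) (hβ : 0 ≤ β) (hα₁ : 0 ≤ α₁)
    (hα₁def : α₁ = α - γ ^ 2 * β) (hh : 0 ≤ h) (N : ℕ) (u1 u2 w1 w2 : ℕ → ℝ) :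
    discEnergy ρ μ β γ α₁ h N u1 u2 w1 w2 ≤
      h * ∑ j ∈ Finset.range (N + 1),
        (nodeE ρ μ α β γ u1 u2 w1 w2 j + nodeE ρ μ α β γ u1 u2 w1 w2 (j + 1)) / 2 := by
  rw [discEnergy]
  have step : ∀ j ∈ Finset.range (N + 1),
      ρ * gridMid w1 j ^ 2 + μ * gridMid w2 j ^ 2
        + β * (γ * gridMid u1 j - gridMid u2 j) ^ 2 + α₁ * gridMid u1 j ^ 2 ≤
      nodeE ρ μ α β γ u1 u2 w1 w2 j + nodeE ρ μ α β γ u1 u2 w1 w2 (j + 1) := by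
    intro j _
    simp only [nodeE, gridMid, hα₁def]
    nlinarith [mul_nonneg hρ (sq_nonneg (w1 j - w1 (j + 1))),
      mul_nonneg hμ (sq_nonneg (w2 j - w2 (j + 1))),
      mul_nonneg (hα₁def ▸ hα₁) (sq_nonneg (u1 j - u1 (j + 1))),
      mul_nonneg hβ (sq_nonneg (γ * u1 j - u2 j - (γ * u1 (j + 1) - u2 (j + 1))))]
  calc h / 2 * ∑ j ∈ Finset.range (N + 1),
      (ρ * gridMid w1 j ^ 2 + μ * gridMid w2 j ^ 2
        + β * (γ * gridMid u1 j - gridMid u2 j) ^ 2 + α₁ * gridMid u1 j ^ 2)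
      ≤ h / 2 * ∑ j ∈ Finset.range (N + 1),
        (nodeE ρ μ α β γ u1 u2 w1 w2 j + nodeE ρ μ α β γ u1 u2 w1 w2 (j + 1)) :=
        mul_le_mul_of_nonneg_left (Finset.sum_le_sum step) (by positivity)
    _ = h * ∑ j ∈ Finset.range (N + 1),
        (nodeE ρ μ α β γ u1 u2 w1 w2 j + nodeE ρ μ α β γ u1 u2 w1 w2 (j + 1)) / 2 := by
        rw [Finset.mul_sum, Finset.mul_sum]
        exact Finset.sum_congr rfl fun j _ => by ring

lemma bdry (ρ μ α β γ α₁ k₁ k₂ d : ℝ) (hρ : 0 < ρ) (hμ : 0 < μ) (hβ : 0 < β) (hγ : 0 < γ)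
    (hα₁ : 0 < α₁) (hk₁ : 0 < k₁) (hk₂ : 0 < k₂) (hα₁def : α₁ = α - γ ^ 2 * β)
    (hd : 0 ≤ d)
    (hd2 : 2 * d < 2 * k₁ * α₁ / (α₁ * ρ + k₁ ^ 2))
    (hd3 : 2 * d < 4 * k₂ * β * α₁ / (2 * α₁ * β * μ + (α + γ ^ 2 * β) * k₂ ^ 2))
    (N : ℕ) (u1 u2 w1 w2 : ℕ → ℝ)
    (hbL1 : α * u1 (N + 1) - γ * β * u2 (N + 1) = -(k₁ * w1 (N + 1)))
    (hbL2 : β * u2 (N + 1) - γ * β * u1 (N + 1) = -(k₂ * w2 (N + 1))) :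
    d * nodeE ρ μ α β γ u1 u2 w1 w2 (N + 1) ≤ k₁ * w1 (N + 1) ^ 2 + k₂ * w2 (N + 1) ^ 2 := by
  have hα : 0 < α := by nlinarith
  set X := w1 (N + 1) with hX
  set Y := w2 (N + 1) with hY
  set P := u1 (N + 1) with hP
  set Q := u2 (N + 1) with hQ
  have e1 : P = -(k₁ * X + γ * k₂ * Y) / α₁ := by
    field_simp
    linear_combination hbL1 + γ * hbL2 + P * hα₁def
  have e2 : Q = -(γ * β * k₁ * X + α * k₂ * Y) / (β * α₁) := by
    field_simp
    linear_combination γ * β * hbL1 + α * hbL2 + β * Q * hα₁def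
  have hd2' : d * (α₁ * ρ + k₁ ^ 2) < k₁ * α₁ := by
    rw [lt_div_iff₀ (by positivity)] at hd2
    linarith
  have hd3' : d * (2 * α₁ * β * μ + (α + γ ^ 2 * β) * k₂ ^ 2) < 2 * k₂ * β * α₁ := by
    rw [lt_div_iff₀ (by positivity)] at hd3
    linarith
  have hnode : 2 * (β * α₁) * nodeE ρ μ α β γ u1 u2 w1 w2 (N + 1) =
      β * α₁ * ρ * X ^ 2 + β * α₁ * μ * Y ^ 2 + β * k₁ ^ 2 * X ^ 2
        + 2 * β * γ * k₁ * k₂ * X * Y + α * k₂ ^ 2 * Y ^ 2 := by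
    simp only [nodeE]
    rw [← hX, ← hY, ← hP, ← hQ, e1, e2]
    field_simp
    rw [show α = α₁ + γ ^ 2 * β by linarith]
    ring
  nlinarith [hnode, hd2', hd3',
    mul_nonneg (mul_nonneg hd hβ.le) (sq_nonneg (k₁ * X - γ * k₂ * Y)),
    mul_nonneg (mul_nonneg hd hβ.le) (mul_nonneg hα₁.le (mul_nonneg hρ.le (sq_nonneg X))),
    mul_nonneg (mul_nonneg hd hβ.le) (mul_nonneg hα₁.le (mul_nonneg hμ.le (sq_nonneg Y))),
    mul_nonneg hβ.le (sq_nonneg X), mul_nonneg hβ.le (sq_nonneg Y),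
    mul_pos hβ hα₁, sq_nonneg X, sq_nonneg Y]
lemma discEnergy_nonneg (ρ μ β γ α₁ h : ℝ) (hρ : 0 ≤ ρ) (hμ : 0 ≤ μ) (hβ : 0 ≤ β)
    (hα₁ : 0 ≤ α₁) (hh : 0 ≤ h) (N : ℕ) (u1 u2 w1 w2 : ℕ → ℝ) :
    0 ≤ discEnergy ρ μ β γ α₁ h N u1 u2 w1 w2 := by
  apply mul_nonneg (by positivity)
  exact Finset.sum_nonneg fun j _ => by positivity

lemma Fbound (ρ μ β γ α₁ η L h : ℝ) (hρ : 0 < ρ) (hμ : 0 < μ) (hβ : 0 < β) (hγ : 0 < γ)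
    (hα₁ : 0 < α₁)
    (hη : η = max (Real.sqrt (ρ / α₁) + Real.sqrt (μ * γ ^ 2 / α₁))
      (Real.sqrt (μ / β) + Real.sqrt (μ * γ ^ 2 / α₁)))
    (N : ℕ) (hL : ((N : ℝ) + 1) * h = L) (hh : 0 < h) (u1 u2 w1 w2 : ℕ → ℝ) :
    |Ffun ρ μ h N u1 u2 w1 w2| ≤ L * η * discEnergy ρ μ β γ α₁ h N u1 u2 w1 w2 := by
  have hηpos : 0 < η := by
    rw [hη]
    have : (0:ℝ) < Real.sqrt (ρ / α₁) := Real.sqrt_pos.mpr (by positivity)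
    have h2 : (0:ℝ) ≤ Real.sqrt (μ * γ ^ 2 / α₁) := Real.sqrt_nonneg _
    exact lt_max_of_lt_left (by linarith)
  have hLpos : 0 < L := by
    rw [← hL]; positivity
  have perabs : ∀ j ∈ Finset.range (N + 1),
      |((j : ℝ) + 1 / 2) * h * (ρ * gridMid w1 j * gridMid u1 j
        + μ * gridMid w2 j * gridMid u2 j)| ≤
      L * (η / 2 * (ρ * gridMid w1 j ^ 2 + μ * gridMid w2 j ^ 2
        + β * (γ * gridMid u1 j - gridMid u2 j) ^ 2 + α₁ * gridMid u1 j ^ 2)) := by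
    intro j hj
    have hjN : (j : ℝ) ≤ (N : ℝ) := by
      exact_mod_cast Nat.le_of_lt_succ (Finset.mem_range.mp hj)
    have hx0 : 0 ≤ ((j : ℝ) + 1 / 2) * h := by positivity
    have hxL : ((j : ℝ) + 1 / 2) * h ≤ L := by
      rw [← hL]
      apply mul_le_mul_of_nonneg_right _ hh.le
      linarith
    have hup := point_le ρ μ β γ α₁ η hρ hμ hβ hγ hα₁ hη
      (gridMid w1 j) (gridMid w2 j) (gridMid u1 j) (gridMid u2 j)
    have hdn := point_le ρ μ β γ α₁ η hρ hμ hβ hγ hα₁ hη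
      (-gridMid w1 j) (-gridMid w2 j) (gridMid u1 j) (gridMid u2 j)
    have hdn' : -(ρ * gridMid w1 j * gridMid u1 j + μ * gridMid w2 j * gridMid u2 j) ≤
        η / 2 * (ρ * gridMid w1 j ^ 2 + μ * gridMid w2 j ^ 2
          + β * (γ * gridMid u1 j - gridMid u2 j) ^ 2 + α₁ * gridMid u1 j ^ 2) := by
      nlinarith [hdn]
    have habsP : |ρ * gridMid w1 j * gridMid u1 j + μ * gridMid w2 j * gridMid u2 j| ≤
        η / 2 * (ρ * gridMid w1 j ^ 2 + μ * gridMid w2 j ^ 2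
          + β * (γ * gridMid u1 j - gridMid u2 j) ^ 2 + α₁ * gridMid u1 j ^ 2) :=
      abs_le.mpr ⟨by linarith, hup⟩
    rw [abs_mul, abs_of_nonneg hx0]
    calc ((j : ℝ) + 1 / 2) * h * |ρ * gridMid w1 j * gridMid u1 j
          + μ * gridMid w2 j * gridMid u2 j|
        ≤ L * |ρ * gridMid w1 j * gridMid u1 j + μ * gridMid w2 j * gridMid u2 j| :=
          mul_le_mul_of_nonneg_right hxL (abs_nonneg _)
      _ ≤ L * (η / 2 * (ρ * gridMid w1 j ^ 2 + μ * gridMid w2 j ^ 2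
          + β * (γ * gridMid u1 j - gridMid u2 j) ^ 2 + α₁ * gridMid u1 j ^ 2)) :=
          mul_le_mul_of_nonneg_left habsP hLpos.le
  rw [Ffun, abs_mul, abs_of_pos hh]
  calc h * |∑ j ∈ Finset.range (N + 1), ((j : ℝ) + 1 / 2) * h *
        (ρ * gridMid w1 j * gridMid u1 j + μ * gridMid w2 j * gridMid u2 j)|
      ≤ h * ∑ j ∈ Finset.range (N + 1), |((j : ℝ) + 1 / 2) * h *
        (ρ * gridMid w1 j * gridMid u1 j + μ * gridMid w2 j * gridMid u2 j)| :=
        mul_le_mul_of_nonneg_left (Finset.abs_sum_le_sum_abs _ _) hh.le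
    _ ≤ h * ∑ j ∈ Finset.range (N + 1),
        L * (η / 2 * (ρ * gridMid w1 j ^ 2 + μ * gridMid w2 j ^ 2
          + β * (γ * gridMid u1 j - gridMid u2 j) ^ 2 + α₁ * gridMid u1 j ^ 2)) :=
        mul_le_mul_of_nonneg_left (Finset.sum_le_sum perabs) hh.le
    _ = L * η * discEnergy ρ μ β γ α₁ h N u1 u2 w1 w2 := by
        rw [discEnergy, Finset.mul_sum, Finset.mul_sum, Finset.mul_sum]
        exact Finset.sum_congr rfl fun j _ => by ring

/-- Exponential stability of the ORFD model, uniform in `h`: if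
`0 < δ < (1/(2L))·min(1/η, 2k₁α₁/(α₁ρ + k₁²), 4k₂βα₁/(2α₁βμ + (α+γ²β)k₂²))`, then along
every solution of the semi-discrete ORFD system,
`E_h(t) ≤ ((1+δLη)/(1−δLη)) e^{−δ(1−δLη)t} E_h(0)` for all `t ≥ 0`. -/
theorem stmt_11 (ρ μ α β γ α₁ η k₁ k₂ δ : ℝ)
    (hρ : 0 < ρ) (hμ : 0 < μ) (hα : 0 < α) (hβ : 0 < β) (hγ : 0 < γ)
    (hk₁ : 0 < k₁) (hk₂ : 0 < k₂)
    (hα₁def : α₁ = α - γ ^ 2 * β) (hα₁ : 0 < α₁)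
    (hη : η = max (Real.sqrt (ρ / α₁) + Real.sqrt (μ * γ ^ 2 / α₁))
      (Real.sqrt (μ / β) + Real.sqrt (μ * γ ^ 2 / α₁)))
    (N : ℕ) (L h : ℝ) (hL : 0 < L) (hh : h = L / (N + 1))
    (hδpos : 0 < δ)
    (hδ : δ < 1 / (2 * L) * min (min (1 / η) (2 * k₁ * α₁ / (α₁ * ρ + k₁ ^ 2)))
      (4 * k₂ * β * α₁ / (2 * α₁ * β * μ + (α + γ ^ 2 * β) * k₂ ^ 2)))
    (u1 u2 w1 w2 : ℝ → ℕ → ℝ)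
    (hode1 : ∀ t ≥ (0 : ℝ), ∀ j ≤ N,
      HasDerivAt (fun s => gridMid (u1 s) j) (gridDx h (w1 t) j) t)
    (hode2 : ∀ t ≥ (0 : ℝ), ∀ j ≤ N,
      HasDerivAt (fun s => gridMid (u2 s) j) (gridDx h (w2 t) j) t)
    (hode3 : ∀ t ≥ (0 : ℝ), ∀ j ≤ N,
      HasDerivAt (fun s => gridMid (w1 s) j)
        ((α * gridDx h (u1 t) j - γ * β * gridDx h (u2 t) j) / ρ) t)
    (hode4 : ∀ t ≥ (0 : ℝ), ∀ j ≤ N,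
      HasDerivAt (fun s => gridMid (w2 s) j)
        ((β * gridDx h (u2 t) j - γ * β * gridDx h (u1 t) j) / μ) t)
    (hbc0 : ∀ t ≥ (0 : ℝ), w1 t 0 = 0 ∧ w2 t 0 = 0)
    (hbcL1 : ∀ t ≥ (0 : ℝ),
      α * u1 t (N + 1) - γ * β * u2 t (N + 1) = -(k₁ * w1 t (N + 1)))
    (hbcL2 : ∀ t ≥ (0 : ℝ),
      β * u2 t (N + 1) - γ * β * u1 t (N + 1) = -(k₂ * w2 t (N + 1))) :
    ∀ t ≥ (0 : ℝ),
      discEnergy ρ μ β γ α₁ h N (u1 t) (u2 t) (w1 t) (w2 t) ≤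
        (1 + δ * L * η) / (1 - δ * L * η) * Real.exp (-δ * (1 - δ * L * η) * t) *
          discEnergy ρ μ β γ α₁ h N (u1 0) (u2 0) (w1 0) (w2 0) := by
  have hNpos : (0:ℝ) < (N : ℝ) + 1 := by positivity
  have hh0 : 0 < h := by rw [hh]; positivity
  have hLh : ((N : ℝ) + 1) * h = L := by rw [hh]; field_simp
  have hηpos : 0 < η := by
    rw [hη]
    have h1 : (0:ℝ) < Real.sqrt (ρ / α₁) := Real.sqrt_pos.mpr (by positivity)
    have h2 : (0:ℝ) ≤ Real.sqrt (μ * γ ^ 2 / α₁) := Real.sqrt_nonneg _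
    exact lt_max_of_lt_left (by linarith)
  set x := δ * L * η with hxdef
  have hxpos : 0 < x := by rw [hxdef]; positivity
  -- x < 1/2
  have hδ1 : δ < 1 / (2 * L) * (1 / η) :=
    lt_of_lt_of_le hδ (mul_le_mul_of_nonneg_left
      ((min_le_left _ _).trans (min_le_left _ _)) (by positivity))
  have hx2 : x < 1 / 2 := by
    have heq : 1 / (2 * L) * (1 / η) = 1 / (2 * L * η) := by
      rw [div_mul_div_comm, one_mul, mul_assoc]
    rw [heq, lt_div_iff₀ (by positivity)] at hδ1
    have : δ * (2 * L * η) = 2 * x := by rw [hxdef]; ring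
    linarith
  have h1x : 0 < 1 - x := by linarith
  have h1xp : 0 < 1 + x := by linarith
  -- extraction of the feedback smallness conditions
  have hδL2 : 2 * (δ * L) < 2 * k₁ * α₁ / (α₁ * ρ + k₁ ^ 2) := by
    have hm : δ < 1 / (2 * L) * (2 * k₁ * α₁ / (α₁ * ρ + k₁ ^ 2)) :=
      lt_of_lt_of_le hδ (mul_le_mul_of_nonneg_left
        ((min_le_left _ _).trans (min_le_right _ _)) (by positivity))
    rw [one_div_mul_eq_div, lt_div_iff₀ (by positivity)] at hm
    linarith
  have hδL3 : 2 * (δ * L) < 4 * k₂ * β * α₁ /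
      (2 * α₁ * β * μ + (α + γ ^ 2 * β) * k₂ ^ 2) := by
    have hm : δ < 1 / (2 * L) * (4 * k₂ * β * α₁ /
        (2 * α₁ * β * μ + (α + γ ^ 2 * β) * k₂ ^ 2)) :=
      lt_of_lt_of_le hδ (mul_le_mul_of_nonneg_left (min_le_right _ _) (by positivity))
    rw [one_div_mul_eq_div, lt_div_iff₀ (by positivity)] at hm
    linarith
  -- abbreviations
  set Et : ℝ → ℝ := fun s => discEnergy ρ μ β γ α₁ h N (u1 s) (u2 s) (w1 s) (w2 s) with hEt
  set Ft : ℝ → ℝ := fun s => Ffun ρ μ h N (u1 s) (u2 s) (w1 s) (w2 s) with hFt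
  set Vt : ℝ → ℝ := fun s => Et s + δ * Ft s with hVt
  set c : ℝ := δ / (1 + x) with hc
  have hc0 : 0 ≤ c := div_nonneg hδpos.le h1xp.le
  set Gt : ℝ → ℝ := fun s => Vt s * Real.exp (c * s) with hGt
  have hEnn : ∀ s : ℝ, 0 ≤ Et s := fun s =>
    discEnergy_nonneg ρ μ β γ α₁ h hρ.le hμ.le hβ.le hα₁.le hh0.le N _ _ _ _
  have hFb : ∀ s : ℝ, |Ft s| ≤ L * η * Et s := fun s =>
    Fbound ρ μ β γ α₁ η L h hρ hμ hβ hγ hα₁ hη N hLh hh0 _ _ _ _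
  have hVub : ∀ s : ℝ, Vt s ≤ (1 + x) * Et s := by
    intro s
    have h2 := (abs_le.mp (hFb s)).2
    have h3 : δ * Ft s ≤ δ * (L * η * Et s) := mul_le_mul_of_nonneg_left h2 hδpos.le
    have h4 : δ * (L * η * Et s) = x * Et s := by rw [hxdef]; ring
    simp only [hVt]
    linarith
  have hVlb : ∀ s : ℝ, (1 - x) * Et s ≤ Vt s := by
    intro s
    have h2 := (abs_le.mp (hFb s)).1
    have h3 : δ * (-(L * η * Et s)) ≤ δ * Ft s := mul_le_mul_of_nonneg_left h2 hδpos.le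
    have h4 : δ * (L * η * Et s) = x * Et s := by rw [hxdef]; ring
    simp only [hVt]
    linarith
  -- the key derivative estimate
  have key : ∀ s ≥ (0:ℝ), ∃ D, HasDerivAt Gt D s ∧ D ≤ 0 := by
    intro s hs
    have hE := Ederiv ρ μ α β γ α₁ k₁ k₂ h hρ.ne' hμ.ne' hh0.ne' hα₁def N u1 u2 w1 w2 s
      (hode1 s hs) (hode2 s hs) (hode3 s hs) (hode4 s hs)
      (hbc0 s hs).1 (hbc0 s hs).2 (hbcL1 s hs) (hbcL2 s hs)
    have hF := Fderiv ρ μ α β γ h hρ.ne' hμ.ne' hh0.ne' N u1 u2 w1 w2 s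
      (hode1 s hs) (hode2 s hs) (hode3 s hs) (hode4 s hs)
    have hV : HasDerivAt Vt (-(k₁ * w1 s (N + 1) ^ 2 + k₂ * w2 s (N + 1) ^ 2)
        + δ * (((N : ℝ) + 1) * h * nodeE ρ μ α β γ (u1 s) (u2 s) (w1 s) (w2 s) (N + 1)
          - h * ∑ j ∈ Finset.range (N + 1),
            (nodeE ρ μ α β γ (u1 s) (u2 s) (w1 s) (w2 s) j
              + nodeE ρ μ α β γ (u1 s) (u2 s) (w1 s) (w2 s) (j + 1)) / 2)) s :=
      hE.add (hF.const_mul δ)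
    have hexp : HasDerivAt (fun r => Real.exp (c * r)) (Real.exp (c * s) * c) s := by
      simpa using ((hasDerivAt_id s).const_mul c).exp
    refine ⟨_, hV.mul hexp, ?_⟩
    have hb := bdry ρ μ α β γ α₁ k₁ k₂ (δ * L) hρ hμ hβ hγ hα₁ hk₁ hk₂ hα₁def
      (by positivity) hδL2 hδL3 N (u1 s) (u2 s) (w1 s) (w2 s) (hbcL1 s hs) (hbcL2 s hs)
    have htr := trap ρ μ α β γ α₁ h hρ.le hμ.le hβ.le hα₁.le hα₁def hh0.le N
      (u1 s) (u2 s) (w1 s) (w2 s)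
    set ND := nodeE ρ μ α β γ (u1 s) (u2 s) (w1 s) (w2 s) (N + 1) with hND
    set SB := ∑ j ∈ Finset.range (N + 1),
        (nodeE ρ μ α β γ (u1 s) (u2 s) (w1 s) (w2 s) j
          + nodeE ρ μ α β γ (u1 s) (u2 s) (w1 s) (w2 s) (j + 1)) / 2 with hSB
    set X := w1 s (N + 1) with hX
    set Y := w2 s (N + 1) with hY
    have htrE : discEnergy ρ μ β γ α₁ h N (u1 s) (u2 s) (w1 s) (w2 s) = Et s := rfl
    rw [htrE] at htr
    have htr' : δ * Et s ≤ δ * (h * SB) := mul_le_mul_of_nonneg_left htr hδpos.le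
    have heq : δ * (((N : ℝ) + 1) * h * ND - h * SB) = δ * L * ND - δ * (h * SB) := by
      rw [hLh]; ring
    have hVd : -(k₁ * X ^ 2 + k₂ * Y ^ 2) + δ * (((N : ℝ) + 1) * h * ND - h * SB)
        ≤ -δ * Et s := by
      rw [heq]; linarith
    have hVc : Vt s * c ≤ δ * Et s := by
      have hcx : c * (1 + x) = δ := by rw [hc]; field_simp
      calc Vt s * c ≤ (1 + x) * Et s * c :=
            mul_le_mul_of_nonneg_right (hVub s) hc0
        _ = δ * Et s := by rw [← hcx]; ring
    have hsum : (-(k₁ * X ^ 2 + k₂ * Y ^ 2) + δ * (((N : ℝ) + 1) * h * ND - h * SB))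
        + Vt s * c ≤ 0 := by linarith
    have hmul := mul_le_mul_of_nonneg_right hsum (Real.exp_pos (c * s)).le
    calc (-(k₁ * X ^ 2 + k₂ * Y ^ 2) + δ * (((N : ℝ) + 1) * h * ND - h * SB))
          * Real.exp (c * s) + Vt s * (Real.exp (c * s) * c)
        = ((-(k₁ * X ^ 2 + k₂ * Y ^ 2) + δ * (((N : ℝ) + 1) * h * ND - h * SB))
          + Vt s * c) * Real.exp (c * s) := by ring
      _ ≤ 0 := by simpa using hmul
  -- monotonicity of the Lyapunov functional
  have cont : ContinuousOn Gt (Set.Ici (0:ℝ)) := by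
    intro s hs
    obtain ⟨D, hD, _⟩ := key s hs
    exact hD.continuousAt.continuousWithinAt
  have diff : DifferentiableOn ℝ Gt (interior (Set.Ici (0:ℝ))) := by
    intro s hs
    rw [interior_Ici] at hs
    obtain ⟨D, hD, _⟩ := key s (le_of_lt hs)
    exact hD.differentiableAt.differentiableWithinAt
  have dnp : ∀ s ∈ interior (Set.Ici (0:ℝ)), deriv Gt s ≤ 0 := by
    intro s hs
    rw [interior_Ici] at hs
    obtain ⟨D, hD, hD0⟩ := key s (le_of_lt hs)
    rw [hD.deriv]
    exact hD0
  have anti := antitoneOn_of_deriv_nonpos (convex_Ici (0:ℝ)) cont diff dnp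
  intro t ht
  have hGle : Gt t ≤ Gt 0 := anti Set.self_mem_Ici ht ht
  have hG0 : Gt 0 = Vt 0 := by simp [hGt]
  have hGt' : Vt t * Real.exp (c * t) ≤ Vt 0 := by
    have h1 : Gt t ≤ Gt 0 := hGle
    simpa [hGt] using h1
  have hexppos := Real.exp_pos (c * t)
  have hVtle : Vt t ≤ Vt 0 * Real.exp (-(c * t)) := by
    rw [Real.exp_neg, ← div_eq_mul_inv]
    exact (le_div_iff₀ hexppos).mpr hGt'
  have hstep : (1 - x) * Et t ≤ (1 + x) * Et 0 * Real.exp (-(c * t)) :=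
    le_trans (hVlb t) (le_trans hVtle
      (mul_le_mul_of_nonneg_right (hVub 0) (Real.exp_pos _).le))
  have hcge : δ * (1 - x) ≤ c := by
    rw [hc, le_div_iff₀ h1xp]
    nlinarith [mul_nonneg hδpos.le (sq_nonneg x)]
  have hexpmono : Real.exp (-(c * t)) ≤ Real.exp (-δ * (1 - x) * t) := by
    apply Real.exp_le_exp.mpr
    have := mul_le_mul_of_nonneg_right hcge ht
    nlinarith
  have hcoef : 0 ≤ (1 + x) * Et 0 := mul_nonneg h1xp.le (hEnn 0)
  have hfin : (1 - x) * Et t ≤ (1 + x) * Et 0 * Real.exp (-δ * (1 - x) * t) :=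
    le_trans hstep (mul_le_mul_of_nonneg_left hexpmono hcoef)
  show Et t ≤ (1 + x) / (1 - x) * Real.exp (-δ * (1 - x) * t) * Et 0
  rw [div_mul_eq_mul_div, div_mul_eq_mul_div, le_div_iff₀ h1x]
  nlinarith [hfin]

end
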